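/- For every integer n ≥ 1 and every ρ > 0, the monic polynomial u_{n+1}^ρ := e_{n+1} − L_n^ρ e_{n+1} of degree n+1 (where e_{n+1}(x) = x^{n+1}) has n+1 distinct roots in the interval [0,1]. -/

import Mathlib

open MeasureTheory

/-- Euler Beta function `B(a,b) = ∫₀¹ t^(a-1) (1-t)^(b-1) dt`. -/
noncomputable def betaFn (a b : ℝ) : ℝ :=
  ∫ t in (0:ℝ)..1, t ^ (a - 1) * (1 - t) ^ (b - 1)

/-- The functionals `F_{n,k}^ρ`. -/
noncomputable def Ffun (n k : ℕ) (ρ : ℝ) (f : ℝ → ℝ) : ℝ :=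
  if k = 0 then f 0
  else if k = n then f 1
  else (betaFn ((k : ℝ) * ρ) (((n : ℝ) - (k : ℝ)) * ρ))⁻¹ *
    ∫ t in (0:ℝ)..1, t ^ ((k : ℝ) * ρ - 1) * (1 - t) ^ (((n : ℝ) - (k : ℝ)) * ρ - 1) * f t

/-- Bernstein basis polynomial `p_{n,k}(x)`. -/
noncomputable def bern (n k : ℕ) (x : ℝ) : ℝ :=
  (n.choose k : ℝ) * x ^ k * (1 - x) ^ (n - k)

/-- The operator `U_n^ρ`. -/
noncomputable def Uop (n : ℕ) (ρ : ℝ) (f : ℝ → ℝ) (x : ℝ) : ℝ :=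
  ∑ k ∈ Finset.range (n + 1), Ffun n k ρ f * bern n k x


open intervalIntegral Set Polynomial

lemma wInt {a b : ℝ} (ha : 0 < a) (hb : 0 < b) {f : ℝ → ℝ} (hf : Continuous f) :
    IntervalIntegrable (fun t => t ^ (a-1) * (1-t) ^ (b-1) * f t) volume 0 1 := by
  have h1 : IntervalIntegrable (fun t => t ^ (a-1) * (1-t) ^ (b-1) * f t) volume 0 (1/2) := by
    have hbase : IntervalIntegrable (fun t : ℝ => t ^ (a-1)) volume 0 (1/2) :=
      intervalIntegral.intervalIntegrable_rpow' (by linarith)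
    have hg : ContinuousOn (fun t : ℝ => (1-t) ^ (b-1)) (Set.uIcc (0:ℝ) (1/2)) := by
      apply ContinuousOn.rpow_const (by exact (continuous_const.sub continuous_id).continuousOn)
      intro x hx
      rw [Set.uIcc_of_le (by norm_num)] at hx
      left; have := hx.2; intro h; nlinarith [hx.1, hx.2]
    exact (hbase.mul_continuousOn hg).mul_continuousOn hf.continuousOn
  have h2 : IntervalIntegrable (fun t => t ^ (a-1) * (1-t) ^ (b-1) * f t) volume (1/2) 1 := by
    have hbase0 : IntervalIntegrable (fun t : ℝ => t ^ (b-1)) volume 0 (1/2) :=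
      intervalIntegral.intervalIntegrable_rpow' (by linarith)
    have hbase : IntervalIntegrable (fun t : ℝ => (1-t) ^ (b-1)) volume (1/2) 1 := by
      have := (hbase0.comp_sub_left 1).symm
      norm_num at this
      exact this
    have hg : ContinuousOn (fun t : ℝ => t ^ (a-1)) (Set.uIcc ((1:ℝ)/2) 1) := by
      apply ContinuousOn.rpow_const (by exact continuous_id.continuousOn)
      intro x hx
      rw [Set.uIcc_of_le (by norm_num)] at hx
      left; intro h; rw [h] at hx; norm_num at hx
    exact (hbase.continuousOn_mul hg).mul_continuousOn hf.continuousOn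
  exact h1.trans h2

lemma wInt' {a b : ℝ} (ha : 0 < a) (hb : 0 < b) :
    IntervalIntegrable (fun t => t ^ (a-1) * (1-t) ^ (b-1)) volume 0 1 := by
  simpa using wInt ha hb continuous_const (f := fun _ => (1:ℝ))

lemma betaFn_pos {a b : ℝ} (ha : 0 < a) (hb : 0 < b) : 0 < betaFn a b := by
  apply intervalIntegral.intervalIntegral_pos_of_pos_on (wInt' ha hb) _ (by norm_num)
  intro x hx
  exact mul_pos (Real.rpow_pos_of_pos hx.1 _) (Real.rpow_pos_of_pos (by linarith [hx.2]) _)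

lemma orth (n k : ℕ) (ρ : ℝ) (hρ : 0 < ρ) (L : Polynomial ℝ) (hk1 : 1 ≤ k) (hk2 : k < n)
    (hL : Ffun n k ρ (fun x => L.eval x) = Ffun n k ρ (fun x => x ^ (n+1))) :
    ∫ t in (0:ℝ)..1, t ^ ((k:ℝ)*ρ - 1) * (1-t) ^ (((n:ℝ)-(k:ℝ))*ρ - 1)
      * ((Polynomial.X^(n+1) - L).eval t) = 0 := by
  have ha : 0 < (k:ℝ) * ρ := mul_pos (by exact_mod_cast hk1) hρ
  have hb : 0 < ((n:ℝ) - (k:ℝ)) * ρ := mul_pos (by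
    have : (k:ℝ) < n := by exact_mod_cast hk2
    linarith) hρ
  rw [Ffun, if_neg (by omega), if_neg (by omega), Ffun, if_neg (by omega), if_neg (by omega)] at hL
  have hβ : (betaFn ((k : ℝ) * ρ) (((n : ℝ) - (k : ℝ)) * ρ))⁻¹ ≠ 0 :=
    inv_ne_zero (betaFn_pos ha hb).ne'
  have hI := mul_left_cancel₀ hβ hL
  have i1 : IntervalIntegrable
      (fun t => t ^ ((k:ℝ)*ρ - 1) * (1-t) ^ (((n:ℝ)-(k:ℝ))*ρ - 1) * (t^(n+1))) volume 0 1 :=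
    wInt ha hb (by continuity)
  have i2 : IntervalIntegrable
      (fun t => t ^ ((k:ℝ)*ρ - 1) * (1-t) ^ (((n:ℝ)-(k:ℝ))*ρ - 1) * (L.eval t)) volume 0 1 :=
    wInt ha hb L.continuous
  have := intervalIntegral.integral_sub i1 i2
  simp only [Polynomial.eval_sub, Polynomial.eval_pow, Polynomial.eval_X, mul_sub]
  rw [this, hI, sub_self]

lemma no_zero_integral {f : ℝ → ℝ} (hfi : IntervalIntegrable f volume 0 1)
    (hzero : ∫ t in (0:ℝ)..1, f t = 0) {S : Set ℝ} (hS : S.Finite)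
    (hpos : ∀ t ∈ Ioo (0:ℝ) 1 \ S, 0 < f t) : False := by
  have hS' : (S ∪ {1} : Set ℝ).Finite := hS.union (finite_singleton 1)
  have hae : ∀ᵐ t ∂(volume.restrict (Ioc (0:ℝ) 1)), t ∉ (S ∪ {1} : Set ℝ) :=
    ae_restrict_of_ae (by
      rw [ae_iff]
      apply measure_mono_null _ (hS'.measure_zero volume)
      intro x hx
      simp only [Set.mem_setOf_eq, not_not] at hx
      tauto)
  have hmem : ∀ᵐ t ∂(volume.restrict (Ioc (0:ℝ) 1)), t ∈ Ioc (0:ℝ) 1 :=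
    ae_restrict_mem measurableSet_Ioc
  have key : ∀ t, t ∈ Ioc (0:ℝ) 1 → t ∉ (S ∪ {1} : Set ℝ) → t ∈ Ioo (0:ℝ) 1 \ S := by
    intro t ht hts
    refine ⟨⟨ht.1, lt_of_le_of_ne ht.2 ?_⟩, fun h => hts (Or.inl h)⟩
    intro h; exact hts (Or.inr h)
  have hnn : 0 ≤ᵐ[volume.restrict (Ioc (0:ℝ) 1)] f := by
    filter_upwards [hae, hmem] with t h1 h2
    exact (hpos t (key t h2 h1)).le
  rw [integral_eq_zero_iff_of_le_of_nonneg_ae (by norm_num) hnn hfi] at hzero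
  have hne : (ae (volume.restrict (Ioc (0:ℝ) 1))).NeBot := by
    refine ae_neBot.2 ?_
    rw [Ne, Measure.restrict_eq_zero]
    simp
  obtain ⟨t, h2, h3⟩ := (hae.and (hmem.and hzero)).exists
  exact absurd h3.2 (hpos t (key t h3.1 h2)).ne'

/-- The monic polynomial `u_{n+1}^ρ = e_{n+1} − L_n^ρ e_{n+1}` of degree `n+1`
has `n+1` distinct roots in `[0,1]`. -/
theorem u_has_distinct_roots (n : ℕ) (hn : 1 ≤ n) (ρ : ℝ) (hρ : 0 < ρ)
    (L : Polynomial ℝ) (hLdeg : L.natDegree ≤ n)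
    (hL : ∀ k ≤ n, Ffun n k ρ (fun x => L.eval x) = Ffun n k ρ (fun x => x ^ (n + 1))) :
    ∃ s : Finset ℝ, s.card = n + 1 ∧ ↑s ⊆ Set.Icc (0 : ℝ) 1 ∧
      ∀ x ∈ s, (Polynomial.X ^ (n + 1) - L).eval x = 0 := by
  classical
  set p : Polynomial ℝ := X ^ (n+1) - L with hp_def
  -- basic facts about p
  have hpd : p.natDegree = n + 1 := by
    rw [hp_def, natDegree_sub_eq_left_of_natDegree_lt] <;>
      simp [natDegree_X_pow] <;> omega
  have hpne : p ≠ 0 := by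
    intro h; rw [h] at hpd; simp at hpd
  have hp0 : p.eval 0 = 0 := by
    have h0 := hL 0 (by omega)
    simp [Ffun] at h0
    simp [hp_def, h0]
  have hp1 : p.eval 1 = 0 := by
    have h1 := hL n (le_refl n)
    simp [Ffun, (by omega : ¬ n = 0)] at h1
    rw [if_neg (show ¬ n = 0 by omega), if_neg (show ¬ n = 0 by omega)] at h1
    simp [hp_def, h1]
  -- root decomposition
  obtain ⟨q, hq, hqdeg, hqroots⟩ := p.exists_prod_multiset_X_sub_C_mul
  have hqne : q ≠ 0 := by
    intro h; rw [h, mul_zero] at hq; exact hpne hq.symm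
  have hqval : ∀ y : ℝ, q.eval y ≠ 0 := by
    intro y hy
    have : y ∈ q.roots := by rw [mem_roots hqne]; exact hy
    rw [hqroots] at this; simp at this
  set R : Multiset ℝ := p.roots with hR_def
  set Rin : Multiset ℝ := R.filter (fun r => r ∈ Ioo (0:ℝ) 1) with hRin_def
  set Rout : Multiset ℝ := R.filter (fun r => ¬ r ∈ Ioo (0:ℝ) 1) with hRout_def
  set T : Finset ℝ := Rin.toFinset with hT_def
  set Todd : Finset ℝ := T.filter (fun r => Odd (Rin.count r)) with hTodd_def
  set c : ℝ → ℝ := fun r => (r/(1-r))^ρ with hc_def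
  set Qp : Polynomial ℝ := ∏ r ∈ Todd, (X - Polynomial.C (c r)) with hQp_def
  set m : ℕ := Todd.card with hm_def
  -- facts about roots
  have hTroot : ∀ r ∈ T, p.eval r = 0 ∧ r ∈ Ioo (0:ℝ) 1 := by
    intro r hr
    rw [hT_def, Multiset.mem_toFinset, hRin_def, Multiset.mem_filter] at hr
    exact ⟨(mem_roots hpne).1 hr.1, by simpa using hr.2⟩
  -- strict monotonicity of c on Ioo
  have hcmono : ∀ {u v : ℝ}, u ∈ Ioo (0:ℝ) 1 → v ∈ Ioo (0:ℝ) 1 → u < v → c u < c v := by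
    intro u v hu hv huv
    apply Real.rpow_lt_rpow (div_nonneg hu.1.le (by linarith [hu.2])) _ hρ
    rw [div_lt_div_iff₀ (by linarith [hv.2] : (0:ℝ) < 1 - u) (by linarith [hv.2])]
    nlinarith [hu.1, hv.2]
  -- eval factorization
  have hfact : ∀ x : ℝ, p.eval x * Qp.eval (c x) =
      (q.eval x * (Rout.map (fun r => x - r)).prod) *
      (∏ r ∈ T, ((x - r) ^ (Rin.count r) *
        (if Odd (Rin.count r) then (c x - c r) else 1))) := by
    intro x
    have e1 : p.eval x = (R.map (fun r => x - r)).prod * q.eval x := by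
      conv_lhs => rw [← hq]
      rw [eval_mul, eval_multiset_prod, Multiset.map_map]
      simp [Function.comp]
    have e2 : (R.map (fun r => x - r)).prod =
        (Rin.map (fun r => x - r)).prod * (Rout.map (fun r => x - r)).prod := by
      conv_lhs => rw [← Multiset.filter_add_not (fun r => r ∈ Ioo (0:ℝ) 1) R]
      rw [Multiset.map_add, Multiset.prod_add]
    have e3 : (Rin.map (fun r => x - r)).prod = ∏ r ∈ T, (x - r) ^ (Rin.count r) :=
      Finset.prod_multiset_map_count _ _
    have e4 : Qp.eval (c x) = ∏ r ∈ Todd, (c x - c r) := by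
      rw [hQp_def, eval_prod]; simp
    have e5 : ∏ r ∈ Todd, (c x - c r) =
        ∏ r ∈ T, (if Odd (Rin.count r) then (c x - c r) else 1) := by
      rw [hTodd_def, Finset.prod_filter]
    calc p.eval x * Qp.eval (c x)
        = (q.eval x * (Rout.map (fun r => x - r)).prod) *
          ((∏ r ∈ T, (x - r) ^ (Rin.count r)) *
           (∏ r ∈ T, (if Odd (Rin.count r) then (c x - c r) else 1))) := by
          rw [e1, e2, e3, e4, e5]; ring
      _ = _ := by rw [← Finset.prod_mul_distrib]
  -- positivity of the paired factor
  have hposfac : ∀ x ∈ Ioo (0:ℝ) 1, p.eval x ≠ 0 →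
      0 < ∏ r ∈ T, ((x - r) ^ (Rin.count r) *
        (if Odd (Rin.count r) then (c x - c r) else 1)) := by
    intro x hx hxr
    apply Finset.prod_pos
    intro r hr
    obtain ⟨hr0, hrio⟩ := hTroot r hr
    have hxne : x ≠ r := fun h => hxr (h ▸ hr0)
    by_cases hodd : Odd (Rin.count r)
    · rw [if_pos hodd]
      rcases lt_or_gt_of_ne hxne with h | h
      · exact mul_pos_of_neg_of_neg (Odd.pow_neg hodd (by linarith))
          (by linarith [hcmono hx hrio h])
      · exact mul_pos (pow_pos (by linarith) _) (by linarith [hcmono hrio hx h])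
    · rw [if_neg hodd, mul_one]
      exact Even.pow_pos (Nat.not_odd_iff_even.1 hodd) (by intro h; exact hxne (by linarith))
  -- same-sign lemma
  have hsign : ∀ s t : ℝ, s ∈ Ioo (0:ℝ) 1 → t ∈ Ioo (0:ℝ) 1 → p.eval s ≠ 0 → p.eval t ≠ 0 →
      0 < (p.eval s * Qp.eval (c s)) * (p.eval t * Qp.eval (c t)) := by
    intro s t hs ht hsr htr
    have hqq : 0 < q.eval s * q.eval t := by
      rcases lt_or_gt_of_ne (hqval s) with h1 | h1 <;>
        rcases lt_or_gt_of_ne (hqval t) with h2 | h2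
      · exact mul_pos_of_neg_of_neg h1 h2
      · exfalso
        have hc0 : (0:ℝ) ∈ Set.uIcc (q.eval s) (q.eval t) := by
          rw [Set.mem_uIcc]; constructor <;> constructor <;> linarith
        obtain ⟨y, _, hy⟩ := intermediate_value_uIcc (q.continuous.continuousOn
          (s := Set.uIcc s t)) hc0
        exact hqval y hy
      · exfalso
        have hc0 : (0:ℝ) ∈ Set.uIcc (q.eval s) (q.eval t) := by
          rw [Set.mem_uIcc]; right; constructor <;> linarith
        obtain ⟨y, _, hy⟩ := intermediate_value_uIcc (q.continuous.continuousOn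
          (s := Set.uIcc s t)) hc0
        exact hqval y hy
      · exact mul_pos h1 h2
    have hout : 0 < (Rout.map (fun r => s - r)).prod * (Rout.map (fun r => t - r)).prod := by
      rw [← Multiset.prod_map_mul]
      apply Multiset.prod_pos
      intro a ha
      obtain ⟨r, hrR, rfl⟩ := Multiset.mem_map.1 ha
      have : ¬ r ∈ Ioo (0:ℝ) 1 := by
        rw [hRout_def, Multiset.mem_filter] at hrR; simpa using hrR.2
      rw [mem_Ioo, not_and_or, not_lt, not_lt] at this
      rcases this with h | h
      · exact mul_pos (by linarith [hs.1]) (by linarith [ht.1])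
      · exact mul_pos_of_neg_of_neg (by linarith [hs.2]) (by linarith [ht.2])
    have key : (p.eval s * Qp.eval (c s)) * (p.eval t * Qp.eval (c t)) =
        ((q.eval s * q.eval t) * ((Rout.map (fun r => s - r)).prod *
          (Rout.map (fun r => t - r)).prod)) *
        ((∏ r ∈ T, ((s - r) ^ (Rin.count r) *
          (if Odd (Rin.count r) then (c s - c r) else 1))) *
         (∏ r ∈ T, ((t - r) ^ (Rin.count r) *
          (if Odd (Rin.count r) then (c t - c r) else 1)))) := by
      rw [hfact s, hfact t]; ring
    rw [key]
    exact mul_pos (mul_pos hqq hout) (mul_pos (hposfac s hs hsr) (hposfac t ht htr))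
  -- the main counting bound
  have hT1 : n - 1 ≤ Todd.card := by
    by_contra hlt
    push_neg at hlt
    have hm2 : m + 2 ≤ n := by omega
    set g : ℕ → ℝ → ℝ := fun j t => t ^ (((j+1:ℕ):ℝ)*ρ - 1) *
      (1-t) ^ (((n:ℝ)-((j+1:ℕ):ℝ))*ρ - 1) * (p.eval t) with hg_def
    have hb : ∀ j, j ∈ Finset.range (m+1) → (0:ℝ) < ((n:ℝ)-((j+1:ℕ):ℝ))*ρ := by
      intro j hj
      rw [Finset.mem_range] at hj
      have : ((j+1:ℕ):ℝ) < (n:ℝ) := by exact_mod_cast (by omega : j + 1 < n)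
      exact mul_pos (by linarith) hρ
    have ha : ∀ j : ℕ, (0:ℝ) < ((j+1:ℕ):ℝ)*ρ := by
      intro j
      exact mul_pos (by exact_mod_cast Nat.succ_pos j) hρ
    have hgint : ∀ j ∈ Finset.range (m+1), IntervalIntegrable (g j) volume 0 1 := by
      intro j hj
      exact wInt (ha j) (hb j hj) p.continuous
    have hgzero : ∀ j ∈ Finset.range (m+1), ∫ t in (0:ℝ)..1, g j t = 0 := by
      intro j hj
      rw [Finset.mem_range] at hj
      exact orth n (j+1) ρ hρ L (by omega) (by omega) (hL (j+1) (by omega))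
    set H : ℝ → ℝ := fun t => ∑ j ∈ Finset.range (m+1), Qp.coeff j * g j t with hH_def
    have hHint : IntervalIntegrable H volume 0 1 := by
      rw [hH_def, ← Finset.sum_fn]
      exact IntervalIntegrable.sum _ (fun j hj => (hgint j hj).const_mul _)
    have hH0 : ∫ t in (0:ℝ)..1, H t = 0 := by
      simp only [hH_def]
      rw [intervalIntegral.integral_finset_sum (fun j hj => (hgint j hj).const_mul _)]
      apply Finset.sum_eq_zero
      intro j hj
      rw [intervalIntegral.integral_const_mul, hgzero j hj, mul_zero]
    have hQdeg : Qp.natDegree < m + 1 := by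
      have : Qp.natDegree = ∑ r ∈ Todd, (X - Polynomial.C (c r)).natDegree :=
        natDegree_prod_of_monic _ _ (fun i _ => monic_X_sub_C _)
      simp only [natDegree_X_sub_C] at this
      rw [this, Finset.sum_const, smul_eq_mul, mul_one]
      omega
    have hHeq : ∀ t ∈ Ioo (0:ℝ) 1, H t =
        t^(ρ-1) * (1-t)^(((n:ℝ)-1)*ρ-1) * (p.eval t * Qp.eval (c t)) := by
      intro t ht
      have ht0 : (0:ℝ) < t := ht.1
      have ht1 : (0:ℝ) < 1 - t := by linarith [ht.2]
      rw [Polynomial.eval_eq_sum_range' hQdeg, Finset.mul_sum, Finset.mul_sum]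
      apply Finset.sum_congr rfl
      intro j hj
      have hcj : (c t)^j = t^(ρ*(j:ℝ)) / (1-t)^(ρ*(j:ℝ)) := by
        rw [hc_def]
        rw [← Real.rpow_natCast ((t/(1-t))^ρ) j, ← Real.rpow_mul (by positivity)]
        exact Real.div_rpow ht0.le ht1.le _
      have het : t ^ (((j+1:ℕ):ℝ)*ρ - 1) = t^(ρ-1) * t^(ρ*(j:ℝ)) := by
        rw [← Real.rpow_add ht0]
        congr 1
        push_cast; ring
      have heu : (1-t) ^ (((n:ℝ)-((j+1:ℕ):ℝ))*ρ - 1) =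
          (1-t)^(((n:ℝ)-1)*ρ-1) / (1-t)^(ρ*(j:ℝ)) := by
        rw [← Real.rpow_sub ht1]
        congr 1
        push_cast; ring
      have hne : (1-t)^(ρ*(j:ℝ)) ≠ 0 := (Real.rpow_pos_of_pos ht1 _).ne'
      rw [hg_def]
      simp only []
      rw [het, heu, hcj]
      field_simp
    have hfinS : (↑(p.roots.toFinset) : Set ℝ).Finite := p.roots.toFinset.finite_toSet
    have hroot_mem : ∀ t : ℝ, t ∈ (↑(p.roots.toFinset) : Set ℝ) ↔ p.eval t = 0 := by
      intro t
      rw [Finset.mem_coe, Multiset.mem_toFinset, mem_roots hpne]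
      exact Iff.rfl
    obtain ⟨t₀, ht₀⟩ := ((Set.Ioo_infinite (by norm_num : (0:ℝ) < 1)).diff hfinS).nonempty
    have ht₀I : t₀ ∈ Ioo (0:ℝ) 1 := ht₀.1
    have ht₀r : p.eval t₀ ≠ 0 := fun h => ht₀.2 ((hroot_mem t₀).2 h)
    have hG0 := hsign t₀ t₀ ht₀I ht₀I ht₀r ht₀r
    have hGne : p.eval t₀ * Qp.eval (c t₀) ≠ 0 := by
      intro h; rw [h] at hG0; simp at hG0
    have hw1 : ∀ t ∈ Ioo (0:ℝ) 1, 0 < t^(ρ-1) * (1-t)^(((n:ℝ)-1)*ρ-1) := by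
      intro t ht
      exact mul_pos (Real.rpow_pos_of_pos ht.1 _)
        (Real.rpow_pos_of_pos (by linarith [ht.2]) _)
    rcases lt_or_gt_of_ne hGne with hneg | hpos
    · apply no_zero_integral hHint.neg (by simp only [Pi.neg_apply]; rw [intervalIntegral.integral_neg, hH0, neg_zero])
        hfinS
      intro t ht
      have htr : p.eval t ≠ 0 := fun h => ht.2 ((hroot_mem t).2 h)
      have hst := hsign t t₀ ht.1 ht₀I htr ht₀r
      have hGt : p.eval t * Qp.eval (c t) < 0 := by nlinarith
      simp only [Pi.neg_apply]
      rw [hHeq t ht.1]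
      nlinarith [hw1 t ht.1]
    · apply no_zero_integral hHint hH0 hfinS
      intro t ht
      have htr : p.eval t ≠ 0 := fun h => ht.2 ((hroot_mem t).2 h)
      have hst := hsign t t₀ ht.1 ht₀I htr ht₀r
      have hGt : 0 < p.eval t * Qp.eval (c t) := by nlinarith
      rw [hHeq t ht.1]
      nlinarith [hw1 t ht.1]
  -- conclusion
  have hTsub : insert 0 (insert 1 T) ⊆ p.roots.toFinset := by
    intro x hx
    rw [Multiset.mem_toFinset, mem_roots hpne]
    simp only [Finset.mem_insert] at hx
    rcases hx with rfl | rfl | hx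
    · exact hp0
    · exact hp1
    · exact (hTroot x hx).1
  have h01T : (0:ℝ) ∉ insert 1 T ∧ (1:ℝ) ∉ T := by
    constructor
    · simp only [Finset.mem_insert]
      push_neg
      exact ⟨by norm_num, fun h => by simpa using (hTroot 0 h).2.1⟩
    · intro h; simpa using (hTroot 1 h).2.2
  have hcard : (insert 0 (insert 1 T)).card = T.card + 2 := by
    rw [Finset.card_insert_of_notMem h01T.1, Finset.card_insert_of_notMem h01T.2]
  have hcard_le : (insert 0 (insert 1 T)).card ≤ n + 1 := by
    calc (insert 0 (insert 1 T)).card ≤ p.roots.toFinset.card := Finset.card_le_card hTsub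
    _ ≤ Multiset.card p.roots := Multiset.toFinset_card_le _
    _ ≤ p.natDegree := p.card_roots'
    _ = n + 1 := hpd
  have hToddT : Todd.card ≤ T.card := Finset.card_le_card (Finset.filter_subset _ _)
  refine ⟨insert 0 (insert 1 T), by omega, ?_, ?_⟩
  · intro x hx
    simp only [Finset.coe_insert, Set.mem_insert_iff] at hx
    rcases hx with rfl | rfl | hx
    · exact ⟨le_refl 0, by norm_num⟩
    · exact ⟨by norm_num, le_refl 1⟩
    · exact Ioo_subset_Icc_self (hTroot x (by exact_mod_cast hx)).2
  · intro x hx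
    simp only [Finset.mem_insert] at hx
    rcases hx with rfl | rfl | hx
    · exact hp0
    · exact hp1
    · exact (hTroot x hx).1
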